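/- If T is an element of a unital C*-algebra K with Im T ≥ ε·1 for some ε > 0, then Im(T⁻¹) ≤ -(ε + ε⁻¹‖T‖²)⁻¹·1; in particular T⁻¹ lies in the lower half-plane H₋(K). -/

import Mathlib

/-- The imaginary part `(T - T*)/(2i)` of an element of a `ℂ`-algebra with star. -/
noncomputable def imPart {K : Type*} [Ring K] [Algebra ℂ K] [StarRing K] (T : K) : K :=
  (2 * Complex.I)⁻¹ • (T - star T)

/-- The lower half-plane of a C*-algebra: elements `S` with `Im S ≤ -δ·1` for some `δ > 0`. -/
def lowerHalfPlane {K : Type*} [Ring K] [Algebra ℂ K] [StarRing K] [PartialOrder K] :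
    Set K :=
  {S | ∃ δ : ℝ, 0 < δ ∧ imPart S ≤ (-δ : ℂ) • (1 : K)}

open Complex in
lemma star_I_smul_one' {K : Type*} [Ring K] [Algebra ℂ K] [PartialOrder K] [StarRing K]
    [StarOrderedRing K] : star (Complex.I • (1 : K)) = -(Complex.I • (1 : K)) := by
  set u : K := Complex.I • (1 : K) with hu
  have hcen : ∀ x : K, u * x = x * u := fun x => by
    rw [hu, smul_mul_assoc, mul_smul_comm, one_mul, mul_one]
  have hu2 : u * u = -1 := by
    rw [hu, smul_mul_assoc, one_mul, smul_smul, Complex.I_mul_I, neg_smul, one_smul]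
  have hsu : ∀ x : K, star u * x = x * star u := fun x => by
    have h1 := congrArg star (hcen (star x))
    rw [star_mul, star_mul, star_star] at h1
    exact h1.symm
  set p : K := star u * u with hp
  have hp0 : 0 ≤ p := star_mul_self_nonneg u
  have hpsa : star p = p := by rw [hp, star_mul, star_star]
  have hpp : p * p = 1 := by
    have h1 : p * p = star (u * u) * (u * u) := by
      rw [star_mul, hp]
      calc star u * u * (star u * u) = star u * (u * star u) * u := by noncomm_ring
        _ = star u * (star u * u) * u := by rw [hsu u]
        _ = star u * star u * (u * u) := by noncomm_ring
    rw [h1, hu2, star_neg, star_one, neg_mul, one_mul, neg_neg]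
  set r : K := 1 - p with hr
  have hrsa : star r = r := by rw [hr, star_sub, star_one, hpsa]
  have hr2 : r * r = r + r := by
    rw [hr]
    noncomm_ring
    rw [hpp]
    abel
  have h1 : 0 ≤ r + r := by
    rw [← hr2]
    calc (0:K) ≤ star r * r := star_mul_self_nonneg r
      _ = r * r := by rw [hrsa]
  have h2 : 0 ≤ -(r + r) := by
    have h3 := star_left_conjugate_nonneg hp0 r
    have hpr : p * r = -r := by
      rw [hr, mul_sub, hpp, mul_one]
      abel
    have h4 : star r * p * r = -(r + r) := by
      rw [hrsa, mul_assoc, hpr, mul_neg, hr2]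
    rwa [h4] at h3
  have hr0 : r + r = 0 := le_antisymm (by simpa using neg_nonneg.mp h2) h1
  have hrz : r = 0 := by
    have h5 : (2 : ℂ) • r = 0 := by rw [two_smul]; exact hr0
    calc r = (2 : ℂ)⁻¹ • ((2:ℂ) • r) := by rw [smul_smul]; norm_num
      _ = 0 := by rw [h5, smul_zero]
  have hp1 : p = 1 := by
    have := sub_eq_zero.mp (hr ▸ hrz)
    exact this.symm
  have huinv : u * (-u) = 1 := by rw [mul_neg, hu2, neg_neg]
  calc star u = star u * (u * -u) := by rw [huinv, mul_one]
    _ = p * -u := by rw [hp, mul_assoc]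
    _ = -u := by rw [hp1, one_mul]

set_option linter.unusedSectionVars false
section Normed
variable {K : Type*} [NormedRing K] [StarRing K] [CStarRing K] [NormedAlgebra ℂ K]
  [PartialOrder K] [StarOrderedRing K]

lemma star_int_smul_one' (n : ℤ) : star ((n : ℂ) • (1 : K)) = (n : ℂ) • (1 : K) := by
  rw [Int.cast_smul_eq_zsmul, star_zsmul, star_one, ← Int.cast_smul_eq_zsmul ℂ]

lemma star_nat_smul_one' (n : ℕ) : star ((n : ℂ) • (1 : K)) = (n : ℂ) • (1 : K) := by
  exact_mod_cast star_int_smul_one' (K := K) (n : ℤ)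

lemma star_rat_smul_one' (q : ℚ) : star ((q : ℂ) • (1 : K)) = (q : ℂ) • (1 : K) := by
  have hd : ((q.den : ℂ)) ≠ 0 := by
    exact_mod_cast (Nat.cast_ne_zero (R := ℂ)).mpr q.den_nz
  set a : K := ((q.den : ℂ))⁻¹ • (1 : K) with ha
  set b : K := ((q.den : ℂ)) • (1 : K) with hb
  have hba : b * a = 1 := by
    rw [hb, ha, smul_mul_smul_comm, one_mul, mul_inv_cancel₀ hd, one_smul]
  have hab : a * b = 1 := by
    rw [hb, ha, smul_mul_smul_comm, one_mul, inv_mul_cancel₀ hd, one_smul]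
  have hsb : star b = b := star_nat_smul_one' q.den
  have hsa : star a = a := by
    have h1 : star a * b = 1 := by
      rw [← hsb, ← star_mul, hba, star_one]
    calc star a = star a * (b * a) := by rw [hba, mul_one]
      _ = (star a * b) * a := by rw [mul_assoc]
      _ = a := by rw [h1, one_mul]
  have hq : (q : ℂ) • (1 : K) = ((q.num : ℂ) • (1 : K)) * a := by
    rw [ha, smul_mul_smul_comm, one_mul, ← div_eq_mul_inv, ← Rat.cast_def]
  have hkey : ((q.num : ℂ) • (1 : K)) * (((q.den : ℂ))⁻¹ • (1 : K)) =
      ((q.num : ℂ) * ((q.den : ℂ))⁻¹) • (1 : K) := by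
    rw [smul_mul_smul_comm, one_mul]
  rw [hq, star_mul, hsa, star_int_smul_one', ha, hkey, mul_comm]
  rw [smul_mul_smul_comm, one_mul]

lemma star_real_smul_one' (r : ℝ) : star (((r : ℝ) : ℂ) • (1 : K)) = ((r : ℝ) : ℂ) • (1 : K) := by
  have hcont : Continuous (fun r : ℝ => ((r : ℂ) • (1 : K))) :=
    Complex.continuous_ofReal.smul continuous_const
  have h := Rat.denseRange_cast (𝕜 := ℝ) |>.equalizer
    (g := fun r : ℝ => star ((r : ℂ) • (1 : K))) (h := fun r : ℝ => (r : ℂ) • (1 : K))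
    (continuous_star.comp hcont) hcont
    (funext fun q => by
      show star ((((q : ℚ) : ℝ) : ℂ) • (1 : K)) = (((q : ℚ) : ℝ) : ℂ) • (1 : K)
      push_cast
      exact star_rat_smul_one' q)
  exact congrFun h r

lemma star_smul'' (c : ℂ) (x : K) : star (c • x) = (starRingEnd ℂ c) • star x := by
  have hc1 : star (c • (1 : K)) = (starRingEnd ℂ c) • (1 : K) := by
    have hdecomp : c • (1 : K) = ((c.re : ℂ)) • (1 : K) +
        ((c.im : ℂ) • (1 : K)) * (Complex.I • (1 : K)) := by
      rw [smul_mul_smul_comm, one_mul, ← add_smul, Complex.re_add_im]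
    have hineg : (((c.im : ℂ)) • (1 : K)) * (Complex.I • (1 : K)) =
        ((c.im : ℂ) * Complex.I) • (1 : K) := by
      rw [smul_mul_smul_comm, one_mul]
    rw [hdecomp, star_add, star_mul, star_I_smul_one', star_real_smul_one',
      star_real_smul_one', neg_mul, smul_mul_smul_comm, one_mul, mul_comm,
      ← neg_smul, ← neg_mul, ← add_smul]
    congr 1
    apply Complex.ext <;> simp
  have hx : c • x = (c • (1 : K)) * x := by rw [smul_mul_assoc, one_mul]
  rw [hx, star_mul, hc1, mul_smul_comm, mul_one]

lemma starModule'' : StarModule ℂ K := ⟨fun c x => star_smul'' c x⟩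

end Normed

section Main
variable {K : Type*} [NormedRing K] [StarRing K] [CStarRing K] [NormedAlgebra ℂ K]
  [CompleteSpace K] [PartialOrder K] [StarOrderedRing K]

lemma real_smul_one_nonneg' {r : ℝ} (hr : 0 ≤ r) : (0 : K) ≤ ((r : ℝ) : ℂ) • (1 : K) := by
  have h1 := star_mul_self_nonneg (((Real.sqrt r : ℝ) : ℂ) • (1 : K))
  rwa [star_real_smul_one', smul_mul_smul_comm, one_mul, ← Complex.ofReal_mul,
    Real.mul_self_sqrt hr] at h1

lemma real_smul_mono' {r : ℝ} (hr : 0 ≤ r) {x y : K} (hxy : x ≤ y) :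
    ((r : ℝ) : ℂ) • x ≤ ((r : ℝ) : ℂ) • y := by
  have hc := star_left_conjugate_le_conjugate hxy (((Real.sqrt r : ℝ) : ℂ) • (1 : K))
  have key : ∀ z : K, star (((Real.sqrt r : ℝ) : ℂ) • (1 : K)) * z *
      (((Real.sqrt r : ℝ) : ℂ) • (1 : K)) = ((r : ℝ) : ℂ) • z := fun z => by
    rw [star_real_smul_one', smul_mul_assoc, one_mul, smul_mul_smul_comm, mul_one,
      ← Complex.ofReal_mul, Real.mul_self_sqrt hr]
  rwa [key x, key y] at hc

lemma real_smul_one_unit' {r : ℝ} (hr : r ≠ 0) : IsUnit (((r : ℝ) : ℂ) • (1 : K)) := by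
  refine ⟨⟨((r : ℝ) : ℂ) • (1 : K), (((r⁻¹ : ℝ)) : ℂ) • (1 : K), ?_, ?_⟩, rfl⟩ <;>
    rw [smul_mul_smul_comm, one_mul, ← Complex.ofReal_mul] <;>
    simp [hr, mul_inv_cancel₀, inv_mul_cancel₀]

theorem imPart_inv_le_of_imPart_pos' (T : K) (ε : ℝ) (hε : 0 < ε)
    (h : (ε : ℂ) • (1 : K) ≤ imPart T) :
    imPart (Ring.inverse T) ≤ (-(ε + ε⁻¹ * ‖T‖ ^ 2)⁻¹ : ℂ) • (1 : K) ∧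
      Ring.inverse T ∈ lowerHalfPlane := by
  letI : StarModule ℂ K := starModule''
  letI : CStarAlgebra K := ⟨⟩
  have h2I : (2 * Complex.I) ≠ 0 := by simp [Complex.I_ne_zero]
  have hTsub : T - star T = (2 * Complex.I) • imPart T := by
    rw [imPart, smul_smul, mul_inv_cancel₀ h2I, one_smul]
  -- basic facts
  have h0 : (0 : K) ≤ (ε : ℂ) • (1 : K) := real_smul_one_nonneg' hε.le
  have hB0 : 0 ≤ imPart T := h0.trans h
  have hBu : IsUnit (imPart T) := CStarAlgebra.isUnit_of_le _ h ((real_smul_one_unit' hε.ne').isStrictlyPositive h0)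
  -- square root
  set s := CFC.sqrt (imPart T) with hs
  have hss : s * s = imPart T := CFC.sqrt_mul_sqrt_self _ hB0
  have hs0 : (0 : K) ≤ s := CFC.sqrt_nonneg _
  have hssa : IsSelfAdjoint s := IsSelfAdjoint.of_nonneg hs0
  have hsu : IsUnit s := by
    obtain ⟨uB, huB⟩ := hBu
    have hcomm : Commute s (↑uB : K) := by
      rw [huB, ← hss]; exact (Commute.refl s).mul_right (Commute.refl s)
    have hcomm' := hcomm.units_inv_right
    refine ⟨⟨s, s * ↑uB⁻¹, ?_, ?_⟩, rfl⟩
    · rw [← mul_assoc, hss, ← huB, Units.mul_inv]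
    · rw [mul_assoc, ← hcomm'.eq, ← mul_assoc, hss, ← huB, Units.mul_inv]
  set sinv : K := ↑hsu.unit⁻¹ with hsinv
  have hsl : sinv * s = 1 := by rw [hsinv]; nth_rewrite 2 [← hsu.unit_spec]; exact Units.inv_mul _
  have hsr : s * sinv = 1 := by rw [hsinv]; nth_rewrite 1 [← hsu.unit_spec]; exact Units.mul_inv _
  have hsinv_sa : star sinv = sinv := by
    have h1 : star sinv * s = 1 := by
      rw [← hssa.star_eq, ← star_mul, hsr, star_one]
    calc star sinv = star sinv * (s * sinv) := by rw [hsr, mul_one]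
      _ = (star sinv * s) * sinv := (mul_assoc _ _ _).symm
      _ = sinv := by rw [h1, one_mul]
  -- the rotated element
  set D : K := sinv * T * sinv with hD
  have hDsub : D - star D = (2 * Complex.I) • (1 : K) := by
    have h1 : star D = sinv * star T * sinv := by
      rw [hD, star_mul, star_mul, hsinv_sa, mul_assoc]
    have h2 : D - star D = sinv * (T - star T) * sinv := by
      rw [h1, hD, mul_sub, sub_mul]
    rw [h2, hTsub, mul_smul_comm, smul_mul_assoc]
    congr 1
    rw [← hss, show sinv * (s * s) * sinv = (sinv * s) * (s * sinv) by simp only [mul_assoc],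
      hsl, hsr, one_mul]
  set J : K := Complex.I • (1 : K) with hJ
  have hJc : ∀ x : K, J * x = x * J := fun x => by
    rw [hJ, smul_mul_assoc, mul_smul_comm, one_mul, mul_one]
  have hJ2 : J * J = -1 := by
    rw [hJ, smul_mul_assoc, one_mul, smul_smul, Complex.I_mul_I, neg_smul, one_smul]
  have hJstar : star J = -J := by
    rw [hJ, star_smul, Complex.star_def, Complex.conj_I, star_one, neg_smul]
  set A : K := D - J with hA
  have hDA : D = A + J := by rw [hA]; abel
  have hAsa : star A = A := by
    have hsD : star D = D - J - J := by
      have h2J : (2 * Complex.I) • (1 : K) = J + J := by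
        rw [hJ, show ((2 : ℂ) * Complex.I) = Complex.I + Complex.I by ring, add_smul]
      have hDs := hDsub
      rw [h2J] at hDs
      have h5 : star D = D - (J + J) := by rw [← hDs]; abel
      rw [h5]; abel
    rw [hA, star_sub, hJstar, hsD]
    abel
  have hA2 : (0 : K) ≤ A * A := by
    have := star_mul_self_nonneg A
    rwa [hAsa] at this
  have hEu : IsUnit (A * A + 1) := by
    refine CStarAlgebra.isUnit_of_le 1 (le_add_of_nonneg_left hA2) (isUnit_one.isStrictlyPositive ?_)
    simpa using star_mul_self_nonneg (1 : K)
  have hmul1 : (A + J) * (A - J) = A * A + 1 := by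
    have hexp : (A + J) * (A - J) = A * A - A * J + J * A - J * J := by noncomm_ring
    rw [hexp, hJ2, ← hJc A]
    abel
  have hmul2 : (A - J) * (A + J) = A * A + 1 := by
    have hexp : (A - J) * (A + J) = A * A + A * J - J * A - J * J := by noncomm_ring
    rw [hexp, hJ2, ← hJc A]
    abel
  have hDu : IsUnit D := by
    obtain ⟨uE, huE⟩ := hEu
    have cJA : Commute J A := hJc A
    have hcommE : Commute D (↑uE : K) := by
      rw [huE, hDA]
      exact (((Commute.refl A).mul_right (Commute.refl A)).add_right (Commute.one_right A)).add_left
        (((cJA.mul_right cJA).add_right (Commute.one_right J)))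
    have hcommE' := hcommE.units_inv_right
    refine ⟨⟨D, (A - J) * ↑uE⁻¹, ?_, ?_⟩, rfl⟩
    · rw [hDA, ← mul_assoc, hmul1, ← huE, Units.mul_inv]
    · rw [mul_assoc, ← hcommE'.eq, ← mul_assoc, hDA, hmul2, ← huE, Units.mul_inv]
  have hTu : IsUnit T := by
    have hTeq : T = s * D * s := by
      rw [hD]
      calc T = (s * sinv) * T * (sinv * s) := by rw [hsr, hsl, one_mul, mul_one]
        _ = s * (sinv * T * sinv) * s := by simp only [mul_assoc]
    rw [hTeq]
    exact (hsu.mul hDu).mul hsu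
  -- the inverse
  have hRinv : Ring.inverse T = ↑hTu.unit⁻¹ := by
    conv_lhs => rw [← hTu.unit_spec]
    exact Ring.inverse_unit _
  set v : K := ↑hTu.unit⁻¹ with hv
  have hv1 : v * T = 1 := by
    rw [hv]; nth_rewrite 2 [← hTu.unit_spec]; exact Units.inv_mul _
  have hv2 : T * v = 1 := by
    rw [hv]; nth_rewrite 1 [← hTu.unit_spec]; exact Units.mul_inv _
  -- imPart of the inverse
  have him : imPart v = -(v * imPart T * star v) := by
    have h1 : v * (star T * star v) = v := by rw [← star_mul, hv1, star_one, mul_one]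
    have h2 : v * T * star v = star v := by rw [hv1, one_mul]
    have h3 : v - star v = v * (star T - T) * star v := by
      rw [mul_sub, sub_mul, h2, mul_assoc v (star T) (star v), h1]
    have h4 : (2 * Complex.I)⁻¹ • (star T - T) = -imPart T := by
      rw [imPart, ← smul_neg, neg_sub]
    rw [imPart, h3, ← smul_mul_assoc, ← mul_smul_comm, h4, mul_neg, neg_mul]
  have hconj : (ε : ℂ) • (v * star v) ≤ v * imPart T * star v := by
    have hc := star_left_conjugate_le_conjugate h (star v)
    rw [star_star] at hc
    have : v * ((ε : ℂ) • (1 : K)) * star v = (ε : ℂ) • (v * star v) := by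
      rw [mul_smul_comm, mul_one, smul_mul_assoc]
    rwa [this] at hc
  have himle : imPart v ≤ -((ε : ℂ) • (v * star v)) := by
    rw [him]; exact neg_le_neg hconj
  -- lower bound for v * star v
  set c0 : ℝ := ε ^ 2 + ‖T‖ ^ 2 with hc0
  have hc0pos : 0 < c0 := by positivity
  have hTu' : IsUnit (star T) := hTu.star
  have hstarv : (↑hTu'.unit⁻¹ : K) = star v := by
    refine Units.inv_eq_of_mul_eq_one_right ?_
    rw [hTu'.unit_spec, ← star_mul, hv1, star_one]
  set cu : Kˣ := ⟨((c0 : ℝ) : ℂ) • (1 : K), (((c0⁻¹ : ℝ)) : ℂ) • (1 : K),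
    by rw [smul_mul_smul_comm, one_mul, ← Complex.ofReal_mul, mul_inv_cancel₀ hc0pos.ne',
      Complex.ofReal_one, one_smul],
    by rw [smul_mul_smul_comm, one_mul, ← Complex.ofReal_mul, inv_mul_cancel₀ hc0pos.ne',
      Complex.ofReal_one, one_smul]⟩ with hcu
  have hanneg : (0 : K) ≤ ↑(hTu'.unit * hTu.unit) := by
    rw [Units.val_mul, hTu'.unit_spec, hTu.unit_spec]
    exact star_mul_self_nonneg T
  have halg : ∀ r : ℝ, algebraMap ℝ K r = ((r : ℝ) : ℂ) • (1 : K) := fun r => by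
    rw [Algebra.algebraMap_eq_smul_one, Complex.coe_smul]
  have hab : (↑(hTu'.unit * hTu.unit) : K) ≤ ↑cu := by
    rw [Units.val_mul, hTu'.unit_spec, hTu.unit_spec]
    have h1 : star T * T ≤ algebraMap ℝ K ‖star T * T‖ :=
      IsSelfAdjoint.le_algebraMap_norm_self (IsSelfAdjoint.star_mul_self T)
    refine h1.trans ?_
    have h2 : algebraMap ℝ K c0 - algebraMap ℝ K ‖star T * T‖ =
        algebraMap ℝ K (c0 - ‖star T * T‖) := by rw [map_sub]
    have h3 : ‖star T * T‖ ≤ c0 := by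
      rw [CStarRing.norm_star_mul_self, hc0]
      nlinarith [norm_nonneg T, sq_nonneg ε]
    have h4 : (0 : K) ≤ algebraMap ℝ K c0 - algebraMap ℝ K ‖star T * T‖ := by
      rw [h2, halg]
      exact real_smul_one_nonneg' (by linarith)
    have h5 : algebraMap ℝ K ‖star T * T‖ ≤ algebraMap ℝ K c0 := by
      rw [← sub_nonneg]; exact h4
    exact h5.trans_eq (halg c0)
  have hinv := CStarAlgebra.inv_le_inv hanneg hab
  have hinva : (↑(hTu'.unit * hTu.unit)⁻¹ : K) = v * star v := by
    rw [mul_inv_rev, Units.val_mul, hstarv, hv]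
  have hinvcu : (↑cu⁻¹ : K) = ((c0⁻¹ : ℝ) : ℂ) • (1 : K) := rfl
  have hlow : ((c0⁻¹ : ℝ) : ℂ) • (1 : K) ≤ v * star v := by
    rw [← hinvcu, ← hinva]; exact hinv
  -- combine
  have hfin : imPart v ≤ (((-(ε * c0⁻¹) : ℝ)) : ℂ) • (1 : K) := by
    have h1 := real_smul_mono' hε.le hlow
    have h2 : ((ε : ℝ) : ℂ) • (((c0⁻¹ : ℝ) : ℂ) • (1 : K)) =
        (((ε * c0⁻¹ : ℝ)) : ℂ) • (1 : K) := by
      rw [smul_smul, ← Complex.ofReal_mul]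
    rw [h2] at h1
    refine himle.trans ?_
    rw [Complex.ofReal_neg, neg_smul]
    exact neg_le_neg h1
  have hsceq : (ε + ε⁻¹ * ‖T‖ ^ 2)⁻¹ = ε * c0⁻¹ := by
    have hd : ε + ε⁻¹ * ‖T‖ ^ 2 = c0 / ε := by
      rw [hc0]
      field_simp
    rw [hd, inv_div, div_eq_mul_inv]
  have hmain : imPart (Ring.inverse T) ≤ (-(ε + ε⁻¹ * ‖T‖ ^ 2)⁻¹ : ℂ) • (1 : K) := by
    rw [hRinv]
    refine hfin.trans_eq ?_
    congr 1
    push_cast [hsceq]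
    ring
  refine ⟨hmain, ⟨(ε + ε⁻¹ * ‖T‖ ^ 2)⁻¹, by positivity, ?_⟩⟩
  refine hmain.trans_eq ?_
  norm_cast

end Main

/-- If `T` is an element of a unital C*-algebra `K` with `Im T ≥ ε·1` for some `ε > 0`, then
`Im (T⁻¹) ≤ -(ε + ε⁻¹‖T‖²)⁻¹·1`; in particular `T⁻¹` lies in the lower half-plane. -/
theorem imPart_inv_le_of_imPart_pos {K : Type*} [NormedRing K] [StarRing K] [CStarRing K]
    [NormedAlgebra ℂ K] [CompleteSpace K] [PartialOrder K] [StarOrderedRing K]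
    (T : K) (ε : ℝ) (hε : 0 < ε) (h : (ε : ℂ) • (1 : K) ≤ imPart T) :
    imPart (Ring.inverse T) ≤ (-(ε + ε⁻¹ * ‖T‖ ^ 2)⁻¹ : ℂ) • (1 : K) ∧
      Ring.inverse T ∈ lowerHalfPlane := by
  exact imPart_inv_le_of_imPart_pos' T ε hε h
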